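/- (Abstract adequacy) Let U be a confluent binary relation on a type α with a normal-form function nf, let T satisfy the diamond property with respect to U (whenever T c d and U c e, there exists f with U d f and T e f), and let R be a binary relation such that for all a, b: (a rewrites by R modulo U to b) if and only if (a rewrites by T modulo U to b). Then for all c, d: c rewrites by R modulo U to d if and only if there exists e with T (nf c) e and ReflTransGen U e (nf d). -/
import Mathlib


/-- `c` rewrites by `R` modulo `U` to `d`. -/
def RewModulo {α : Type*} (R U : α → α → Prop) (c d : α) : Prop :=
  ∃ c' d', Relation.EqvGen U c c' ∧ R c' d' ∧ Relation.EqvGen U d' d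

private lemma normal_reduct {α : Type*} {U : α → α → Prop} {n x : α}
    (h : Relation.ReflTransGen U n x) (hn : ¬ ∃ d, U n d) : x = n := by
  induction h using Relation.ReflTransGen.head_induction_on with
  | refl => rfl
  | head h' _ _ => exact absurd ⟨_, h'⟩ hn

private lemma eqv_join {α : Type*} {U : α → α → Prop}
    (hconf : ∀ a b c, Relation.ReflTransGen U a b → Relation.ReflTransGen U a c →
      ∃ e, Relation.ReflTransGen U b e ∧ Relation.ReflTransGen U c e)
    {a b : α} (h : Relation.EqvGen U a b) :
    ∃ e, Relation.ReflTransGen U a e ∧ Relation.ReflTransGen U b e := by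
  induction h with
  | rel x y hxy => exact ⟨y, Relation.ReflTransGen.single hxy, Relation.ReflTransGen.refl⟩
  | refl x => exact ⟨x, Relation.ReflTransGen.refl, Relation.ReflTransGen.refl⟩
  | symm x y _ ih => exact ⟨ih.choose, ih.choose_spec.2, ih.choose_spec.1⟩
  | trans x y z _ _ ih1 ih2 =>
      obtain ⟨e1, hx1, hy1⟩ := ih1
      obtain ⟨e2, hy2, hz2⟩ := ih2
      obtain ⟨f, h1, h2⟩ := hconf y e1 e2 hy1 hy2
      exact ⟨f, hx1.trans h1, hz2.trans h2⟩

private lemma rtg_to_eqv {α : Type*} {U : α → α → Prop} {a b : α}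
    (h : Relation.ReflTransGen U a b) : Relation.EqvGen U a b := by
  induction h with
  | refl => exact Relation.EqvGen.refl a
  | tail _ h ih => exact ih.trans _ _ _ (Relation.EqvGen.rel _ _ h)

/-- Abstract adequacy: rewriting by `R` modulo `U` is equivalent to applying the
transformed system `T` on `U`-normal forms and then renormalising by `U`. -/
theorem abstract_adequacy {α : Type*} (U T R : α → α → Prop) (nf : α → α)
    (hconf : ∀ a b c, Relation.ReflTransGen U a b → Relation.ReflTransGen U a c →
      ∃ e, Relation.ReflTransGen U b e ∧ Relation.ReflTransGen U c e)
    (hnf_reach : ∀ c, Relation.ReflTransGen U c (nf c))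
    (hnf_normal : ∀ c, ¬ ∃ d, U (nf c) d)
    (hdiamond : ∀ c d e, T c d → U c e → ∃ f, U d f ∧ T e f)
    (hequiv : ∀ a b, RewModulo R U a b ↔ RewModulo T U a b) :
    ∀ c d, RewModulo R U c d ↔ ∃ e, T (nf c) e ∧ Relation.ReflTransGen U e (nf d) := by
  -- nf is invariant under EqvGen
  have nf_eq : ∀ a b, Relation.EqvGen U a b → nf a = nf b := by
    intro a b h
    obtain ⟨e, hae, hbe⟩ := eqv_join hconf h
    obtain ⟨f, hf1, hf2⟩ := hconf a (nf a) e (hnf_reach a) hae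
    have hf : f = nf a := normal_reduct hf1 (hnf_normal a)
    obtain ⟨g, hg1, hg2⟩ := hconf b (nf b) e (hnf_reach b) hbe
    have hg : g = nf b := normal_reduct hg1 (hnf_normal b)
    obtain ⟨k, hk1, hk2⟩ := hconf e f g hf2 hg2
    rw [hf] at hk1; rw [hg] at hk2
    have h1 := normal_reduct hk1 (hnf_normal a)
    have h2 := normal_reduct hk2 (hnf_normal b)
    rw [← h1, ← h2]
  -- strip lemma: T commutes with RTG U
  have strip : ∀ c d c'', T c d → Relation.ReflTransGen U c c'' →
      ∃ f, T c'' f ∧ Relation.ReflTransGen U d f := by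
    intro c d c'' hT hU
    induction hU with
    | refl => exact ⟨d, hT, Relation.ReflTransGen.refl⟩
    | tail _ hbc ih =>
        obtain ⟨f, hTf, hdf⟩ := ih
        obtain ⟨g, hfg, hTg⟩ := hdiamond _ _ _ hTf hbc
        exact ⟨g, hTg, hdf.tail hfg⟩
  intro c d
  rw [hequiv]
  constructor
  · rintro ⟨c', d', hcc', hT, hd'd⟩
    have hc : nf c = nf c' := nf_eq _ _ hcc'
    obtain ⟨e, hTe, hd'e⟩ := strip c' d' (nf c') hT (hnf_reach c')
    refine ⟨e, hc ▸ hTe, ?_⟩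
    have : nf e = nf d := by
      rw [← nf_eq _ _ hd'd, nf_eq _ _ (rtg_to_eqv hd'e)]
    exact this ▸ hnf_reach e
  · rintro ⟨e, hTe, hed⟩
    refine ⟨nf c, e, ?_, hTe, ?_⟩
    · exact rtg_to_eqv (hnf_reach c)
    · exact (rtg_to_eqv hed).trans _ _ _ ((rtg_to_eqv (hnf_reach d)).symm _ _)
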